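/- arXiv:2203.10319 — 4 statements merged into one kernel-verified Lean document; each statement's English description precedes it below -/
import Mathlib

section
/- Let $\mathcal{A}(X) = X\left(\tfrac{3}{2}I_s - \tfrac{1}{2}X^\top X\right)$ on $\mathbb{R}^{m\times s}$ and let $X$ satisfy $X^\top X = I_s$. Then for every direction $D\in\mathbb{R}^{m\times s}$, the derivative of the map $X\mapsto \mathcal{A}(X)^\top \mathcal{A}(X) - I_s$ at $X$ in direction $D$ is zero. -/
open Matrix

lemma cdo_ring_aux {s : ℕ} (E : Matrix (Fin s) (Fin s) ℝ) :
    ((1 : Matrix (Fin s) (Fin s) ℝ) - (1/2 : ℝ) • E) * (1 + E) * (1 - (1/2 : ℝ) • E) - 1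
      = -(3/4 : ℝ) • (E * E) + (1/4 : ℝ) • (E * E * E) := by
  simp only [mul_sub, sub_mul, mul_add, add_mul, smul_mul_assoc, mul_smul_comm, smul_smul,
    smul_sub, smul_add, one_mul, mul_one]
  module

/-- The constraint dissolving operator for the Stiefel manifold:
`𝒜(X) = X (3/2 Iₛ - 1/2 XᵀX)`. -/
noncomputable def stiefelCDO {m s : ℕ} (X : Matrix (Fin m) (Fin s) ℝ) : Matrix (Fin m) (Fin s) ℝ :=
  X * ((3 / 2 : ℝ) • (1 : Matrix (Fin s) (Fin s) ℝ) - (1 / 2 : ℝ) • (Xᵀ * X))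

/-- on the Stiefel manifold, the derivative of
`X ↦ 𝒜(X)ᵀ𝒜(X) - Iₛ` in any direction `D` vanishes, i.e.
`d/dt |_{t=0} (𝒜(X+tD)ᵀ𝒜(X+tD) - Iₛ) = 0` entrywise. -/
theorem stiefelCDO_constraint_derivative_vanishes {m s : ℕ}
    (X : Matrix (Fin m) (Fin s) ℝ) (hX : Xᵀ * X = 1) :
    ∀ D : Matrix (Fin m) (Fin s) ℝ, ∀ i j : Fin s,
      deriv (fun t : ℝ =>
        (((stiefelCDO (X + t • D))ᵀ * stiefelCDO (X + t • D) - 1 :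
          Matrix (Fin s) (Fin s) ℝ)) i j) 0 = 0 := by
  intro D i j
  set S : Matrix (Fin s) (Fin s) ℝ := Xᵀ * D + Dᵀ * X with hS
  set P : Matrix (Fin s) (Fin s) ℝ := Dᵀ * D with hP
  set M : ℝ → Matrix (Fin s) (Fin s) ℝ := fun t => S + t • P with hM
  set E : ℝ → Matrix (Fin s) (Fin s) ℝ := fun t => t • M t with hE
  -- Gram matrix
  have hG : ∀ t : ℝ, (X + t • D)ᵀ * (X + t • D) = 1 + E t := by
    intro t
    rw [transpose_add, transpose_smul, Matrix.add_mul, Matrix.mul_add, Matrix.mul_add, hX]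
    simp only [hE, hM, hS, hP, Matrix.mul_smul, Matrix.smul_mul, smul_smul, smul_add]
    abel
  have hEsymm : ∀ t : ℝ, (E t)ᵀ = E t := by
    intro t
    simp only [hE, hM, hS, hP, transpose_smul, transpose_add, transpose_mul,
      transpose_transpose]
    abel
  have hCDO : ∀ t : ℝ, stiefelCDO (X + t • D)
      = (X + t • D) * (1 - (1/2 : ℝ) • E t) := by
    intro t
    rw [stiefelCDO, hG]
    congr 1
    rw [smul_add]
    rw [show (3/2 : ℝ) • (1 : Matrix (Fin s) (Fin s) ℝ)
        = 1 + (1/2 : ℝ) • (1 : Matrix (Fin s) (Fin s) ℝ) by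
      rw [← sub_eq_iff_eq_add']; rw [show (3/2 : ℝ) • (1 : Matrix (Fin s) (Fin s) ℝ)
        - 1 = (3/2 : ℝ) • (1 : Matrix (Fin s) (Fin s) ℝ) - (1:ℝ) • 1 by simp, ← sub_smul]
      norm_num]
    abel
  -- key factorization
  have key : ∀ t : ℝ, (stiefelCDO (X + t • D))ᵀ * stiefelCDO (X + t • D) - 1
      = t ^ 2 • (-(3/4 : ℝ) • (M t * M t) + ((1/4 : ℝ) * t) • (M t * M t * M t)) := by
    intro t
    conv_lhs => rw [hCDO t, transpose_mul, transpose_sub, transpose_smul, transpose_one,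
      hEsymm, Matrix.mul_assoc, ← Matrix.mul_assoc ((X + t • D)ᵀ), hG, ← Matrix.mul_assoc, cdo_ring_aux]
    have h2 : E t * E t = t ^ 2 • (M t * M t) := by
      simp [hE, smul_mul_assoc, mul_smul_comm, smul_smul, sq]
    have h3 : E t * E t * E t = t ^ 3 • (M t * M t * M t) := by
      simp [hE, smul_mul_assoc, mul_smul_comm, smul_smul, pow_succ, sq, mul_assoc]
    rw [h3, h2]
    match_scalars <;> ring
  -- the entry function
  have hfun : (fun t : ℝ =>
      (((stiefelCDO (X + t • D))ᵀ * stiefelCDO (X + t • D) - 1 :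
        Matrix (Fin s) (Fin s) ℝ)) i j)
      = fun t : ℝ => t ^ 2 *
        ((-(3/4 : ℝ) • (M t * M t) + ((1/4 : ℝ) * t) • (M t * M t * M t)) i j) := by
    funext t
    rw [key t]
    simp [Matrix.smul_apply, smul_eq_mul]
  rw [hfun]
  have hgd : Differentiable ℝ (fun t : ℝ =>
      ((-(3/4 : ℝ) • (M t * M t) + ((1/4 : ℝ) * t) • (M t * M t * M t)) i j)) := by
    simp only [hM, Matrix.add_apply, Matrix.smul_apply, Matrix.mul_apply, smul_eq_mul,
      Matrix.neg_apply, Finset.mul_sum, Finset.sum_mul]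
    fun_prop
  have h1 : HasDerivAt (fun t : ℝ => t ^ 2) ((2 : ℕ) * (0:ℝ) ^ (2 - 1)) 0 := hasDerivAt_pow 2 0
  have h2 := h1.fun_mul (hgd 0).hasDerivAt
  rw [h2.deriv]
  simp
end

section
/- Under the setting of the constraint dissolving operator on a smooth embedded manifold (Assumptions: $\mathcal{A}$ locally Lipschitz smooth, $\mathcal{A}(z)=z$ on $\mathcal{M}$, $J_{\mathcal{A}}(x)J_c(x)=0$ on $\mathcal{M}$, LICQ holds), for any $x\in\mathcal{M}$: $J_{\mathcal{A}}(x)d = 0$ if and only if $d \in \mathrm{range}(J_c(x))$. -/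
open Matrix

private theorem ker_adj_eq_orth {E F : Type*} [NormedAddCommGroup E] [InnerProductSpace ℝ E]
    [FiniteDimensional ℝ E] [NormedAddCommGroup F] [InnerProductSpace ℝ F]
    [FiniteDimensional ℝ F] (T : E →ₗ[ℝ] F) :
    LinearMap.ker (LinearMap.adjoint T) = (LinearMap.range T)ᗮ := by
  ext d
  simp only [LinearMap.mem_ker, Submodule.mem_orthogonal]
  constructor
  · intro h u hu
    obtain ⟨w, rfl⟩ := hu
    rw [real_inner_comm, ← LinearMap.adjoint_inner_left, h, inner_zero_left]
  · intro h
    rw [← @inner_self_eq_zero ℝ, LinearMap.adjoint_inner_left, real_inner_comm]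
    exact h _ ⟨_, rfl⟩

private theorem tangent_fixed {n p : ℕ}
    (c : EuclideanSpace ℝ (Fin n) → EuclideanSpace ℝ (Fin p))
    (hc : ContDiff ℝ 1 c)
    (A : EuclideanSpace ℝ (Fin n) → EuclideanSpace ℝ (Fin n))
    (hA : ContDiff ℝ 1 A)
    (hfix : ∀ z, c z = 0 → A z = z)
    (x : EuclideanSpace ℝ (Fin n)) (hx : c x = 0)
    (hsurj : (fderiv ℝ c x).range = ⊤)
    (d : EuclideanSpace ℝ (Fin n)) (hd : fderiv ℝ c x d = 0) :
    fderiv ℝ A x d = d := by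
  set f' := fderiv ℝ c x with hf'
  have hstrict : HasStrictFDerivAt c f' x :=
    hc.contDiffAt.hasStrictFDerivAt one_ne_zero
  set ψ := hstrict.implicitFunction c f' hsurj (c x) with hψdef
  have hψ0 : ψ 0 = x := hstrict.implicitFunction_apply_image hsurj
  have hψder : HasStrictFDerivAt ψ (f'.ker).subtypeL 0 :=
    hstrict.to_implicitFunction hsurj
  have hev : ∀ᶠ y : f'.ker in nhds 0, c (ψ y) = c x := by
    have hmap := hstrict.map_implicitFunction_eq (f' := f') hsurj
    have hcont : Filter.Tendsto
        (fun y : f'.ker => ((c x, y) : _ × f'.ker))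
        (nhds 0) (nhds (c x, 0)) :=
      (Continuous.tendsto' (by continuity) 0 (c x, 0) rfl)
    exact hcont.eventually hmap
  have hevfix : ψ =ᶠ[nhds 0] (A ∘ ψ) := by
    filter_upwards [hev] with y hy
    exact (hfix _ (hy.trans hx)).symm
  have hAder : HasFDerivAt A (fderiv ℝ A x) x :=
    ((hA.differentiable one_ne_zero) x).hasFDerivAt
  have hcomp : HasFDerivAt (A ∘ ψ)
      ((fderiv ℝ A x).comp (f'.ker).subtypeL) 0 := by
    have hA' : HasFDerivAt A (fderiv ℝ A x) (ψ 0) := hψ0 ▸ hAder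
    exact hA'.comp 0 hψder.hasFDerivAt
  have h2 : HasFDerivAt ψ ((fderiv ℝ A x).comp (f'.ker).subtypeL) 0 :=
    hcomp.congr_of_eventuallyEq hevfix
  have hun := hψder.hasFDerivAt.unique h2
  have hdmem : d ∈ f'.ker := by simpa [hf'] using hd
  have h3 := ContinuousLinearMap.ext_iff.mp hun ⟨d, hdmem⟩
  simpa using h3.symm

/-- under the blanket assumptions on the constraint dissolving
operator (`𝒜` locally Lipschitz smooth, `𝒜 = id` on `ℳ`, `J_𝒜 J_c = 0` on `ℳ`,
LICQ), for any `x ∈ ℳ`: `J_𝒜(x) d = 0` iff `d ∈ range(J_c(x))`. -/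
theorem jacobian_nullspace_eq_range_Jc
    {n p : ℕ} (c : EuclideanSpace ℝ (Fin n) → EuclideanSpace ℝ (Fin p))
    (hc : ContDiff ℝ 1 c)
    (A : EuclideanSpace ℝ (Fin n) → EuclideanSpace ℝ (Fin n))
    (hA : ContDiff ℝ 1 A)
    (hAlip : ∀ y, ∃ U ∈ nhds y, ∃ L : NNReal, LipschitzOnWith L (fderiv ℝ A) U)
    (Jc : EuclideanSpace ℝ (Fin n) → Matrix (Fin n) (Fin p) ℝ)
    (hJc : ∀ y (v : EuclideanSpace ℝ (Fin n)),
      fderiv ℝ c y v = Matrix.toEuclideanLin (Jc y)ᵀ v)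
    (Ja : EuclideanSpace ℝ (Fin n) → Matrix (Fin n) (Fin n) ℝ)
    (hJa : ∀ y (v : EuclideanSpace ℝ (Fin n)),
      fderiv ℝ A y v = Matrix.toEuclideanLin (Ja y)ᵀ v)
    (hfix : ∀ z, c z = 0 → A z = z)
    (hJaJc : ∀ z, c z = 0 → Ja z * Jc z = 0)
    (hLICQ : ∀ z, c z = 0 → (Jc z).rank = p)
    (x : EuclideanSpace ℝ (Fin n)) (hx : c x = 0) :
    ∀ d : Fin n → ℝ, (Ja x) *ᵥ d = 0 ↔ ∃ u : Fin p → ℝ, d = (Jc x) *ᵥ u := by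
  -- surjectivity of the derivative of `c` at `x` (LICQ)
  have hsurj : (fderiv ℝ c x).range = ⊤ := by
    rw [LinearMap.range_eq_top]
    have hsurj' : Function.Surjective ((Jc x)ᵀ.mulVecLin) := by
      rw [← LinearMap.range_eq_top]
      apply Submodule.eq_top_of_finrank_eq
      rw [← Matrix.rank, Matrix.rank_transpose, hLICQ x hx]
      simp [Module.finrank_pi]
    intro w
    obtain ⟨v, hv⟩ := hsurj' w.ofLp
    exact ⟨WithLp.toLp 2 v, (hJc x _).trans (congrArg (WithLp.toLp 2) hv)⟩
  -- the derivative of `A` fixes tangent vectors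
  have htan : ∀ d : EuclideanSpace ℝ (Fin n),
      Matrix.toEuclideanLin (Jc x)ᵀ d = 0 → Matrix.toEuclideanLin (Ja x)ᵀ d = d := by
    intro d hd
    rw [← hJa]
    exact tangent_fixed c hc A hA hfix x hx hsurj d (by rw [hJc]; exact hd)
  -- linear algebra: set up maps on Euclidean spaces
  set T : EuclideanSpace ℝ (Fin p) →ₗ[ℝ] EuclideanSpace ℝ (Fin n) :=
    Matrix.toEuclideanLin (Jc x) with hT
  set S : EuclideanSpace ℝ (Fin n) →ₗ[ℝ] EuclideanSpace ℝ (Fin n) :=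
    Matrix.toEuclideanLin (Ja x)ᵀ with hS
  have hadjT : LinearMap.adjoint T = Matrix.toEuclideanLin (Jc x)ᵀ := by
    rw [hT, ← Matrix.toEuclideanLin_conjTranspose_eq_adjoint]; simp
  have hadjS : LinearMap.adjoint S = Matrix.toEuclideanLin (Ja x) := by
    rw [hS, ← Matrix.toEuclideanLin_conjTranspose_eq_adjoint]; simp
  have hrangeS : LinearMap.range S = LinearMap.ker (LinearMap.adjoint T) := by
    apply le_antisymm
    · rintro _ ⟨w, rfl⟩
      rw [LinearMap.mem_ker, hadjT]
      show WithLp.toLp 2 ((Jc x)ᵀ *ᵥ ((Ja x)ᵀ *ᵥ w.ofLp)) = 0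
      rw [mulVec_mulVec, ← Matrix.transpose_mul, hJaJc x hx, Matrix.transpose_zero,
        Matrix.zero_mulVec]; rfl
    · intro u hu
      rw [LinearMap.mem_ker, hadjT] at hu
      exact ⟨u, htan u hu⟩
  have hkerS : LinearMap.ker (LinearMap.adjoint S) = LinearMap.range T := by
    rw [ker_adj_eq_orth, hrangeS, ker_adj_eq_orth, Submodule.orthogonal_orthogonal]
  intro d
  constructor
  · intro h
    have hmem : (WithLp.toLp 2 d : EuclideanSpace ℝ (Fin n)) ∈ LinearMap.ker (LinearMap.adjoint S) := by
      rw [LinearMap.mem_ker, hadjS]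
      show WithLp.toLp 2 (Ja x *ᵥ d) = 0
      rw [h]; rfl
    rw [hkerS] at hmem
    obtain ⟨u, hu⟩ := hmem
    exact ⟨u.ofLp, congrArg WithLp.ofLp hu.symm⟩
  · rintro ⟨u, rfl⟩
    show Ja x *ᵥ (Jc x *ᵥ u) = 0
    rw [mulVec_mulVec, hJaJc x hx, Matrix.zero_mulVec]
end

section
/- Let $x\in\mathcal{M}=\{y:c(y)=0\}$ be a first-order stationary point of $\min_{c(y)=0} f(y)$, i.e., there exists $\lambda\in\mathbb{R}^p$ with $\nabla f(x) = J_c(x)\lambda$ and $c(x)=0$. Suppose the constraint dissolving operator $\mathcal{A}$ satisfies $J_{\mathcal{A}}(x)J_c(x)=0$ and $\mathcal{A}(x)=x$. Then $x$ is a first-order stationary point of $h(y) = f(\mathcal{A}(y)) + \frac{\beta}{2}\|c(y)\|^2$, i.e., $\nabla h(x)=0$. -/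
open Matrix

/-- a first-order stationary point of the constrained problem
(`∇f(x) = J_c(x) λ`, `c(x) = 0`) is a first-order stationary point of the
constraint dissolving function `h(y) = f(𝒜(y)) + β/2 ‖c(y)‖²`. -/
theorem stationary_of_OCP_is_stationary_of_CDF
    {n p : ℕ} (β : ℝ) (hβ : 0 < β)
    (f : EuclideanSpace ℝ (Fin n) → ℝ) (hf : Differentiable ℝ f)
    (A : EuclideanSpace ℝ (Fin n) → EuclideanSpace ℝ (Fin n))
    (hA : Differentiable ℝ A)
    (c : EuclideanSpace ℝ (Fin n) → EuclideanSpace ℝ (Fin p))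
    (hc : Differentiable ℝ c)
    (Ja : EuclideanSpace ℝ (Fin n) → Matrix (Fin n) (Fin n) ℝ)
    (hJa : ∀ y (v : EuclideanSpace ℝ (Fin n)),
      fderiv ℝ A y v = Matrix.toEuclideanLin (Ja y)ᵀ v)
    (Jc : EuclideanSpace ℝ (Fin n) → Matrix (Fin n) (Fin p) ℝ)
    (hJc : ∀ y (v : EuclideanSpace ℝ (Fin n)),
      fderiv ℝ c y v = Matrix.toEuclideanLin (Jc y)ᵀ v)
    (x : EuclideanSpace ℝ (Fin n)) (lam : EuclideanSpace ℝ (Fin p))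
    (hstat : gradient f x = Matrix.toEuclideanLin (Jc x) lam)
    (hfeas : c x = 0)
    (hAx : A x = x)
    (hJaJc : Ja x * Jc x = 0) :
    gradient (fun y => f (A y) + β / 2 * ‖c y‖ ^ 2) x = 0 := by
  have h2 : HasFDerivAt (fun y : EuclideanSpace ℝ (Fin n) => β / 2 * ‖c y‖ ^ 2) (0 : EuclideanSpace ℝ (Fin n) →L[ℝ] ℝ) x := by
    have hc2 : HasFDerivAt (fun y => (inner ℝ (c y) (c y) : ℝ))
        ((fderivInnerCLM ℝ (c x, c x)).comp ((fderiv ℝ c x).prod (fderiv ℝ c x))) x :=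
      ((hc x).hasFDerivAt).inner ℝ ((hc x).hasFDerivAt)
    have hz : ((fderivInnerCLM ℝ (c x, c x)).comp ((fderiv ℝ c x).prod (fderiv ℝ c x)))
        = 0 := by
      ext v
      simp [fderivInnerCLM_apply, hfeas]
    rw [hz] at hc2
    have hc3 : HasFDerivAt (fun y : EuclideanSpace ℝ (Fin n) => ‖c y‖ ^ 2) (0 : EuclideanSpace ℝ (Fin n) →L[ℝ] ℝ) x := by
      have he : (fun y : EuclideanSpace ℝ (Fin n) => ‖c y‖ ^ 2)
          = fun y => (inner ℝ (c y) (c y) : ℝ) := by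
        funext y; rw [real_inner_self_eq_norm_sq]
      rw [he]; exact hc2
    simpa using hc3.const_mul (β / 2)
  have h1 : HasFDerivAt (fun y => f (A y)) (0 : EuclideanSpace ℝ (Fin n) →L[ℝ] ℝ) x := by
    have hcomp : HasFDerivAt (fun y => f (A y))
        ((fderiv ℝ f (A x)).comp (fderiv ℝ A x)) x :=
      ((hf (A x)).hasFDerivAt).comp x ((hA x).hasFDerivAt)
    have hz : (fderiv ℝ f (A x)).comp (fderiv ℝ A x) = 0 := by
      ext v
      have hgrad : fderiv ℝ f x = InnerProductSpace.toDual ℝ _ (gradient f x) :=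
        ((InnerProductSpace.toDual ℝ _).apply_symm_apply _).symm
      rw [ContinuousLinearMap.comp_apply, hAx, hgrad, InnerProductSpace.toDual_apply_apply, hstat, hJa]
      have key : (inner ℝ (Matrix.toEuclideanLin (Jc x) lam)
          (Matrix.toEuclideanLin (Ja x)ᵀ v) : ℝ) = 0 := by
        simp only [Matrix.toEuclideanLin_apply, PiLp.inner_apply, RCLike.inner_apply,
          starRingEnd_apply, star_trivial]
        show ((Ja x)ᵀ *ᵥ _) ⬝ᵥ ((Jc x) *ᵥ _) = 0
        rw [dotProduct_comm, Matrix.dotProduct_mulVec, Matrix.vecMul_transpose, Matrix.mulVec_mulVec, hJaJc,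
          Matrix.zero_mulVec, zero_dotProduct]
      simpa using key
    rw [hz] at hcomp; exact hcomp
  have hsum := h1.add h2
  rw [add_zero] at hsum
  have hg : HasGradientAt (fun y => f (A y) + β / 2 * ‖c y‖ ^ 2) 0 x := by
    rw [hasGradientAt_iff_hasFDerivAt]
    rw [map_zero]; exact hsum
  exact hg.gradient
end

section
/- Let $x\in\mathcal{M}$ with $c(x)=0$ and $J_c(x)$ of full column rank, and suppose $\mathcal{A}$ satisfies $\mathcal{A}(x)=x$, $J_{\mathcal{A}}(x)J_c(x)=0$, and the null space of $J_{\mathcal{A}}(x)$ equals $\mathrm{range}(J_c(x))$. If $\nabla h(x)=0$ where $h(y)=f(\mathcal{A}(y))+\frac{\beta}{2}\|c(y)\|^2$, then $\nabla f(x) \in \mathrm{range}(J_c(x))$; i.e., $x$ is a first-order stationary point (KKT point) of $\min f$ subject to $c=0$. -/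
open Matrix

/-- at a feasible point `x` with LICQ where the null space of
`J_𝒜(x)` equals `range(J_c(x))`, stationarity of the constraint dissolving
function `h` implies that `x` is a KKT point: `∇f(x) ∈ range(J_c(x))`. -/
theorem stationary_of_CDF_is_KKT
    {n p : ℕ} (β : ℝ) (hβ : 0 < β)
    (f : EuclideanSpace ℝ (Fin n) → ℝ) (hf : Differentiable ℝ f)
    (A : EuclideanSpace ℝ (Fin n) → EuclideanSpace ℝ (Fin n))
    (hA : Differentiable ℝ A)
    (c : EuclideanSpace ℝ (Fin n) → EuclideanSpace ℝ (Fin p))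
    (hc : Differentiable ℝ c)
    (Ja : EuclideanSpace ℝ (Fin n) → Matrix (Fin n) (Fin n) ℝ)
    (hJa : ∀ y (v : EuclideanSpace ℝ (Fin n)),
      fderiv ℝ A y v = Matrix.toEuclideanLin (Ja y)ᵀ v)
    (Jc : EuclideanSpace ℝ (Fin n) → Matrix (Fin n) (Fin p) ℝ)
    (hJc : ∀ y (v : EuclideanSpace ℝ (Fin n)),
      fderiv ℝ c y v = Matrix.toEuclideanLin (Jc y)ᵀ v)
    (x : EuclideanSpace ℝ (Fin n))
    (hfeas : c x = 0) (hrank : (Jc x).rank = p)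
    (hAx : A x = x)
    (hJaJc : Ja x * Jc x = 0)
    (hnull : ∀ v : EuclideanSpace ℝ (Fin n),
      Matrix.toEuclideanLin (Ja x) v = 0 ↔
        ∃ u : EuclideanSpace ℝ (Fin p), v = Matrix.toEuclideanLin (Jc x) u)
    (hstat : gradient (fun y => f (A y) + β / 2 * ‖c y‖ ^ 2) x = 0) :
    ∃ lam : EuclideanSpace ℝ (Fin p),
      gradient f x = Matrix.toEuclideanLin (Jc x) lam := by
  -- derivative of the penalty term vanishes at x
  have hsq : HasFDerivAt (fun y => β / 2 * ‖c y‖ ^ 2)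
      (0 : EuclideanSpace ℝ (Fin n) →L[ℝ] ℝ) x := by
    have h1 := HasFDerivAt.inner (𝕜 := ℝ) ((hc x).hasFDerivAt) ((hc x).hasFDerivAt)
    have h2 : HasFDerivAt (fun y => ‖c y‖ ^ 2)
        (0 : EuclideanSpace ℝ (Fin n) →L[ℝ] ℝ) x := by
      have heq : (fun y => ‖c y‖ ^ 2) = fun y => @inner ℝ _ _ (c y) (c y) := by
        funext y; rw [real_inner_self_eq_norm_sq]
      rw [heq]
      refine h1.congr_fderiv ?_
      ext v
      simp [hfeas]
    simpa using h2.const_mul (β / 2)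
  have hcomp : HasFDerivAt (fun y => f (A y))
      ((fderiv ℝ f (A x)).comp (fderiv ℝ A x)) x :=
    ((hf (A x)).hasFDerivAt).comp x (hA x).hasFDerivAt
  have hh : HasFDerivAt (fun y => f (A y) + β / 2 * ‖c y‖ ^ 2)
      ((fderiv ℝ f (A x)).comp (fderiv ℝ A x)) x := by
    exact (hcomp.add hsq).congr_fderiv (by simp)
  have hfd : fderiv ℝ (fun y => f (A y) + β / 2 * ‖c y‖ ^ 2) x
      = (fderiv ℝ f (A x)).comp (fderiv ℝ A x) := hh.fderiv
  rw [hAx] at hfd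
  have hzero : (fderiv ℝ f x).comp (fderiv ℝ A x) = 0 := by
    rw [← hfd]
    have heq : gradient (fun y => f (A y) + β / 2 * ‖c y‖ ^ 2) x
        = (InnerProductSpace.toDual ℝ _).symm
          (fderiv ℝ (fun y => f (A y) + β / 2 * ‖c y‖ ^ 2) x) := rfl
    rw [heq] at hstat
    have := congrArg (InnerProductSpace.toDual ℝ _) hstat
    simpa using this
  -- inner product characterization of gradient f x
  have hgrad : ∀ w, @inner ℝ _ _ (gradient f x) w = fderiv ℝ f x w := by
    intro w
    exact InnerProductSpace.toDual_symm_apply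
  have key : ∀ v : EuclideanSpace ℝ (Fin n),
      @inner ℝ _ _ (gradient f x) (Matrix.toEuclideanLin (Ja x)ᵀ v) = 0 := by
    intro v
    rw [hgrad, ← hJa x v]
    simpa using ContinuousLinearMap.ext_iff.mp hzero v
  have hadj : Matrix.toEuclideanLin (Ja x)
      = LinearMap.adjoint (Matrix.toEuclideanLin (Ja x)ᵀ) := by
    rw [← Matrix.toEuclideanLin_conjTranspose_eq_adjoint]
    congr 1
  have hJazero : Matrix.toEuclideanLin (Ja x) (gradient f x) = 0 := by
    have : ∀ v, @inner ℝ _ _ (Matrix.toEuclideanLin (Ja x) (gradient f x)) v = 0 := by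
      intro v
      rw [hadj, LinearMap.adjoint_inner_left]
      exact key v
    exact ext_inner_right ℝ (by simpa using this)
  obtain ⟨u, hu⟩ := (hnull (gradient f x)).mp hJazero
  exact ⟨u, hu⟩
end
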